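/- Every derivation tree of the McCarthy 91-function clauses corresponding to a successful computation with dimension-instrumented semantics satisfies: if mc91(N, X, K) is derivable then K ≤ 2 (assuming the standard semantics where mc91(N,X) holds iff X = N - 10 for N > 100 and X = 91 for N ≤ 100, with K the dimension of the derivation tree). -/
import Mathlib


/-- Dimension-instrumented McCarthy 91-function. -/
inductive mc91 : ℤ → ℤ → ℕ → Prop
  | base {N X : ℤ} : N > 100 → X = N - 10 → mc91 N X 0
  | step {N Y2 X : ℤ} {K1 K2 K : ℕ} : N ≤ 100 → mc91 (N + 11) Y2 K1 →
      mc91 Y2 X K2 → K = (if K1 = K2 then K1 + 1 else max K1 K2) → mc91 N X K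

lemma mc91_char {N X : ℤ} {K : ℕ} (h : mc91 N X K) :
    X = (if N > 100 then N - 10 else 91) ∧
    K = (if N > 100 then 0 else if N ≥ 90 then 1 else 2) := by
  induction h with
  | base h1 h2 => simp [if_pos h1, h2]
  | step hle h1 h2 hK ih1 ih2 =>
    obtain ⟨hY, hK1⟩ := ih1
    obtain ⟨hX, hK2⟩ := ih2
    subst hK
    split_ifs at hY hK1 hX hK2 ⊢ <;> omega

theorem mc91_dim_le_two {N X : ℤ} {K : ℕ} (h : mc91 N X K) : K ≤ 2 := by
  have := (mc91_char h).2
  split_ifs at this <;> omega
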